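/- Let (λ_k) be positive reals and (γ_k) nonnegative reals with ∑_k γ_k λ_k^{1/2} < ∞ and ∑_k γ_k < ∞. If additionally ∑_k (γ_k λ_k)² < ∞, then for all 0 ≤ t1 ≤ t ≤ T, ∑_k γ_k² λ_k² [∫_0^{t1} (e^{−λ_k(t−s)} − e^{−λ_k(t1−s)})² ds + ∫_{t1}^{t} e^{−2λ_k(t−s)} ds] ≤ C (t − t1)^{2γ} for any fixed γ ∈ (0,1/2), where C depends on γ, T and ∑_k γ_k² λ_k² but not on t, t1. -/

import Mathlib

lemma exp_integral_eq (c a b : ℝ) (hc : c ≠ 0) :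
    ∫ s in a..b, Real.exp (-(c*(b-s))) = (1 - Real.exp (-(c*(b-a))))/c := by
  have hderiv : ∀ s ∈ Set.uIcc a b,
      HasDerivAt (fun x => Real.exp (-(c*(b-x)))/c) (Real.exp (-(c*(b-s)))) s := by
    intro s _
    have h1 : HasDerivAt (fun x : ℝ => -(c*(b-x))) c s := by
      simpa using (((hasDerivAt_id s).const_sub b).const_mul (-c))
    have h2 := (h1.exp).div_const c
    simpa [mul_div_assoc, mul_div_cancel_right₀ _ hc] using h2
  have hcont : IntervalIntegrable (fun s => Real.exp (-(c*(b-s)))) MeasureTheory.volume a b := by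
    apply Continuous.intervalIntegrable; fun_prop
  rw [intervalIntegral.integral_eq_sub_of_hasDerivAt hderiv hcont]
  simp [sub_div]

lemma one_sub_exp_le_min {x : ℝ} : 1 - Real.exp (-x) ≤ min 1 x := by
  refine le_min ?_ ?_
  · have := Real.exp_pos (-x); linarith
  · have := Real.add_one_le_exp (-x); linarith

lemma min_le_rpow {x γ : ℝ} (hx : 0 < x) (h0 : 0 < γ) (h1 : γ ≤ 1) : min 1 x ≤ x ^ γ := by
  rcases le_total 1 x with h | h
  · rw [min_eq_left h]
    exact Real.one_le_rpow h h0.le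
  · rw [min_eq_right h]
    calc x = x ^ (1:ℝ) := (Real.rpow_one x).symm
    _ ≤ x ^ γ := Real.rpow_le_rpow_of_exponent_ge hx h h1

lemma key_estimate (γ L t1 t : ℝ) (hγ0 : 0 < γ) (hγ1 : 2*γ ≤ 1)
    (hL : 0 < L) (h0 : 0 ≤ t1) (hlt : t1 < t) :
    (∫ s in (0:ℝ)..t1, (Real.exp (-L*(t-s)) - Real.exp (-L*(t1-s)))^2) +
      (∫ s in t1..t, Real.exp (-2*L*(t-s)))
    ≤ (3/2) * L ^ (2*γ - 1) * (t - t1) ^ (2*γ) := by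
  set h : ℝ := t - t1 with hh_def
  have hh : 0 < h := by simp [hh_def]; linarith
  have h2L : (0:ℝ) < 2*L := by linarith
  -- rewrite first integrand
  have hrw : ∀ s : ℝ, (Real.exp (-L*(t-s)) - Real.exp (-L*(t1-s)))^2
      = (1 - Real.exp (-(L*h)))^2 * Real.exp (-((2*L)*(t1-s))) := by
    intro s
    have hA : Real.exp (-L*(t-s)) = Real.exp (-L*(t1-s)) * Real.exp (-(L*h)) := by
      rw [← Real.exp_add, hh_def]; ring_nf
    rw [hA, show -((2*L)*(t1-s)) = (-L*(t1-s)) + (-L*(t1-s)) by ring, Real.exp_add]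
    ring
  have hI1 : (∫ s in (0:ℝ)..t1, (Real.exp (-L*(t-s)) - Real.exp (-L*(t1-s)))^2)
      = (1 - Real.exp (-(L*h)))^2 * ((1 - Real.exp (-((2*L)*t1)))/(2*L)) := by
    simp_rw [hrw]
    rw [intervalIntegral.integral_const_mul, exp_integral_eq (2*L) 0 t1 h2L.ne']
    simp
  have hI2 : (∫ s in t1..t, Real.exp (-2*L*(t-s)))
      = (1 - Real.exp (-((2*L)*h)))/(2*L) := by
    have : ∀ s : ℝ, Real.exp (-2*L*(t-s)) = Real.exp (-((2*L)*(t-s))) := by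
      intro s; ring_nf
    simp_rw [this]
    rw [exp_integral_eq (2*L) t1 t h2L.ne']
  rw [hI1, hI2]
  -- bounds
  have hm1 : (1 - Real.exp (-(L*h)))^2 ≤ (L*h) ^ (2*γ) := by
    have ha := one_sub_exp_le_min (x := L*h)
    have hb : 0 ≤ 1 - Real.exp (-(L*h)) := by
      have : Real.exp (-(L*h)) ≤ 1 := Real.exp_le_one_iff.mpr (by nlinarith)
      linarith
    have hc : min 1 (L*h) ≤ (L*h) ^ (2*γ) :=
      min_le_rpow (mul_pos hL hh) (by linarith) hγ1
    nlinarith [min_le_left (1:ℝ) (L*h)]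
  have hm2 : 1 - Real.exp (-((2*L)*h)) ≤ ((2*L)*h) ^ (2*γ) :=
    le_trans one_sub_exp_le_min (min_le_rpow (mul_pos h2L hh) (by linarith) hγ1)
  have hfrac : (1 - Real.exp (-((2*L)*t1)))/(2*L) ≤ 1/(2*L) := by
    gcongr
    have := Real.exp_pos (-((2*L)*t1)); linarith
  have hF0 : 0 ≤ (1 - Real.exp (-((2*L)*t1)))/(2*L) := by
    apply div_nonneg _ h2L.le
    have : Real.exp (-((2*L)*t1)) ≤ 1 := Real.exp_le_one_iff.mpr (by nlinarith)
    linarith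
  have e1 : ((L*h):ℝ) ^ (2*γ) = L ^ (2*γ) * h ^ (2*γ) := Real.mul_rpow hL.le hh.le
  have e2 : (((2*L)*h):ℝ) ^ (2*γ) = (2:ℝ) ^ (2*γ) * L ^ (2*γ) * h ^ (2*γ) := by
    rw [show (2*L)*h = 2*(L*h) by ring, Real.mul_rpow (by norm_num) (mul_pos hL hh).le, e1,
      mul_assoc]
  have h22 : (2:ℝ) ^ (2*γ) ≤ 2 := by
    calc (2:ℝ) ^ (2*γ) ≤ (2:ℝ) ^ (1:ℝ) := Real.rpow_le_rpow_of_exponent_le one_le_two hγ1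
    _ = 2 := Real.rpow_one 2
  have hsub : L ^ (2*γ - 1) = L ^ (2*γ) / L := Real.rpow_sub_one hL.ne' _
  have step1 : (1 - Real.exp (-(L*h)))^2 * ((1 - Real.exp (-((2*L)*t1)))/(2*L))
      ≤ (L ^ (2*γ) * h ^ (2*γ)) * (1/(2*L)) := by
    rw [← e1]
    exact mul_le_mul hm1 hfrac hF0 (Real.rpow_nonneg (mul_pos hL hh).le _)
  have step2 : (1 - Real.exp (-((2*L)*h)))/(2*L)
      ≤ ((2:ℝ) ^ (2*γ) * L ^ (2*γ) * h ^ (2*γ))/(2*L) := by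
    rw [← e2]
    gcongr
  have comb : (L ^ (2*γ) * h ^ (2*γ)) * (1/(2*L)) + ((2:ℝ)^(2*γ) * L^(2*γ) * h^(2*γ))/(2*L)
      = ((1 + (2:ℝ)^(2*γ)) * (L^(2*γ) * h^(2*γ)))/(2*L) := by ring
  have hfin : ((1 + (2:ℝ)^(2*γ)) * (L^(2*γ) * h^(2*γ)))/(2*L)
      ≤ (3/2) * L ^ (2*γ - 1) * h ^ (2*γ) := by
    rw [hsub, show (3/2) * (L^(2*γ)/L) * h^(2*γ) = (3 * (L^(2*γ) * h^(2*γ)))/(2*L) by ring]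
    gcongr
    linarith
  calc (1 - Real.exp (-(L*h)))^2 * ((1 - Real.exp (-((2*L)*t1)))/(2*L))
        + (1 - Real.exp (-((2*L)*h)))/(2*L)
      ≤ (L ^ (2*γ) * h ^ (2*γ)) * (1/(2*L)) + ((2:ℝ)^(2*γ) * L^(2*γ) * h^(2*γ))/(2*L) :=
        add_le_add step1 step2
    _ = ((1 + (2:ℝ)^(2*γ)) * (L^(2*γ) * h^(2*γ)))/(2*L) := comb
    _ ≤ (3/2) * L ^ (2*γ - 1) * h ^ (2*γ) := hfin

set_option maxHeartbeats 1000000 in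
theorem holder_series_estimate (lam γk : ℕ → ℝ)
    (hlam : ∀ k, 0 < lam k) (hγk : ∀ k, 0 ≤ γk k)
    (h1 : Summable (fun k => γk k * (lam k) ^ ((1:ℝ)/2)))
    (h2 : Summable γk)
    (h3 : Summable (fun k => (γk k * lam k)^2))
    (γ T : ℝ) (hγ : γ ∈ Set.Ioo (0:ℝ) (1/2)) (hT : 0 < T) :
    ∃ C : ℝ, 0 < C ∧ ∀ t1 t : ℝ, 0 ≤ t1 → t1 ≤ t → t ≤ T →
      (∑' k, (γk k)^2 * (lam k)^2 *
        ((∫ s in (0:ℝ)..t1,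
            (Real.exp (-(lam k) * (t - s)) - Real.exp (-(lam k) * (t1 - s)))^2) +
         ∫ s in t1..t, Real.exp (-2 * (lam k) * (t - s))))
        ≤ C * (t - t1) ^ (2 * γ) := by
  obtain ⟨hγ0, hγhalf⟩ := hγ
  have hγ1' : 2*γ ≤ 1 := by linarith
  have hS2 : ∀ k, γk k ≤ ∑' j, γk j := fun k => Summable.le_tsum h2 k (fun j _ => hγk j)
  set S2 := ∑' j, γk j with hS2def
  have hbsum : Summable (fun k => (γk k)^2 * (lam k) ^ (1+2*γ)) := by
    refine Summable.of_nonneg_of_le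
      (fun k => mul_nonneg (sq_nonneg _) (Real.rpow_nonneg (hlam k).le _)) ?_
      ((h1.mul_left S2).add h3)
    · intro k
      have hLk := hlam k
      have hcase : (lam k) ^ (1+2*γ) ≤ (lam k) ^ ((1:ℝ)/2) + (lam k)^2 := by
        rcases le_total (lam k) 1 with h | h
        · have hx : (lam k) ^ (1+2*γ) ≤ (lam k) ^ ((1:ℝ)/2) :=
            Real.rpow_le_rpow_of_exponent_ge hLk h (by linarith)
          nlinarith [sq_nonneg (lam k)]
        · have hx : (lam k) ^ (1+2*γ) ≤ (lam k) ^ (2:ℝ) :=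
            Real.rpow_le_rpow_of_exponent_le h (by linarith)
          have h2' : (lam k) ^ (2:ℝ) = (lam k)^2 := by
            rw [show (2:ℝ) = ((2:ℕ):ℝ) by norm_num, Real.rpow_natCast]
          have hr : 0 ≤ (lam k) ^ ((1:ℝ)/2) := Real.rpow_nonneg hLk.le _
          rw [h2'] at hx
          linarith
      calc (γk k)^2 * (lam k) ^ (1+2*γ)
          ≤ (γk k)^2 * ((lam k)^((1:ℝ)/2) + (lam k)^2) :=
            mul_le_mul_of_nonneg_left hcase (by positivity)
        _ = γk k * (γk k * (lam k)^((1:ℝ)/2)) + (γk k * lam k)^2 := by ring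
        _ ≤ S2 * (γk k * (lam k)^((1:ℝ)/2)) + (γk k * lam k)^2 := by
            have hnn : 0 ≤ γk k * (lam k)^((1:ℝ)/2) :=
              mul_nonneg (hγk k) (Real.rpow_nonneg (hlam k).le _)
            have := hS2 k
            nlinarith
  set B := ∑' k, (γk k)^2 * (lam k) ^ (1+2*γ) with hBdef
  have hBnn : 0 ≤ B :=
    tsum_nonneg (fun k => mul_nonneg (sq_nonneg _) (Real.rpow_nonneg (hlam k).le _))
  refine ⟨(3/2)*B + 1, by linarith, ?_⟩
  intro t1 t h0 h12 h2T
  rcases eq_or_lt_of_le h12 with heq | hlt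
  · subst heq
    simp
    positivity
  · have hterm : ∀ k, (γk k)^2 * (lam k)^2 *
        ((∫ s in (0:ℝ)..t1,
            (Real.exp (-(lam k) * (t - s)) - Real.exp (-(lam k) * (t1 - s)))^2) +
         ∫ s in t1..t, Real.exp (-2 * (lam k) * (t - s)))
        ≤ ((γk k)^2 * (lam k) ^ (1+2*γ)) * ((3/2) * (t-t1)^(2*γ)) := by
      intro k
      have hk := key_estimate γ (lam k) t1 t hγ0 hγ1' (hlam k) h0 hlt
      have hstep := mul_le_mul_of_nonneg_left hk
        (show 0 ≤ (γk k)^2 * (lam k)^2 by positivity)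
      refine hstep.trans_eq ?_
      rw [show (1:ℝ)+2*γ = ((2:ℕ):ℝ) + (2*γ-1) by push_cast; ring,
        Real.rpow_add (hlam k), Real.rpow_natCast]
      ring
    have hnn : ∀ k, 0 ≤ (γk k)^2 * (lam k)^2 *
        ((∫ s in (0:ℝ)..t1,
            (Real.exp (-(lam k) * (t - s)) - Real.exp (-(lam k) * (t1 - s)))^2) +
         ∫ s in t1..t, Real.exp (-2 * (lam k) * (t - s))) := by
      intro k
      have hi1 : 0 ≤ ∫ s in (0:ℝ)..t1,
          (Real.exp (-(lam k) * (t - s)) - Real.exp (-(lam k) * (t1 - s)))^2 := by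
        apply intervalIntegral.integral_nonneg h0
        intro u _; positivity
      have hi2 : 0 ≤ ∫ s in t1..t, Real.exp (-2 * (lam k) * (t - s)) := by
        apply intervalIntegral.integral_nonneg h12
        intro u _; positivity
      have hc : 0 ≤ (γk k)^2 * (lam k)^2 := by positivity
      exact mul_nonneg hc (add_nonneg hi1 hi2)
    have hgsum : Summable (fun k => ((γk k)^2 * (lam k) ^ (1+2*γ)) * ((3/2) * (t-t1)^(2*γ))) :=
      hbsum.mul_right _
    have hlsum : Summable (fun k => (γk k)^2 * (lam k)^2 *
        ((∫ s in (0:ℝ)..t1,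
            (Real.exp (-(lam k) * (t - s)) - Real.exp (-(lam k) * (t1 - s)))^2) +
         ∫ s in t1..t, Real.exp (-2 * (lam k) * (t - s)))) :=
      Summable.of_nonneg_of_le hnn hterm hgsum
    calc (∑' k, (γk k)^2 * (lam k)^2 *
        ((∫ s in (0:ℝ)..t1,
            (Real.exp (-(lam k) * (t - s)) - Real.exp (-(lam k) * (t1 - s)))^2) +
         ∫ s in t1..t, Real.exp (-2 * (lam k) * (t - s))))
        ≤ ∑' k, ((γk k)^2 * (lam k) ^ (1+2*γ)) * ((3/2) * (t-t1)^(2*γ)) :=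
          Summable.tsum_le_tsum hterm hlsum hgsum
      _ = B * ((3/2) * (t-t1)^(2*γ)) := tsum_mul_right
      _ ≤ ((3/2)*B + 1) * (t-t1)^(2*γ) := by
          have hpow : 0 ≤ (t-t1)^(2*γ) := Real.rpow_nonneg (by linarith) _
          nlinarith
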